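/- Let B be a right Ore localisable ring with right Ore set S. Then the right fraction module B|S ≅ B[S⁻¹] is a filtered colimit of free left B-modules of rank one, and consequently B[S⁻¹] is flat as a left B-module. -/

import Mathlib

/-! STATEMENT 5: for a right Ore set S in B, the right fraction module B|S ≅ B[S⁻¹]
is a filtered colimit of free rank-one left B-modules (expressed concretely: the
canonical maps B → B|S, b ↦ b|s, are compatible with the right-multiplication
transition maps, are jointly surjective, and have the expected eventual kernels),
and consequently B[S⁻¹] is flat as a left B-module (expressed by the equational
criterion for flatness). -/

/-- The submodule of relations defining the module of right fractions. -/
noncomputable def fracRel (B : Type) [Ring B] (S : Set B) : Submodule B (↥S →₀ B) :=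
  Submodule.span B { v | ∃ (s x : B) (hs : s ∈ S) (hsx : s * x ∈ S),
    v = Finsupp.single ⟨s * x, hsx⟩ x - Finsupp.single ⟨s, hs⟩ 1 }

/-- The left `B`-module `B|S` of right fractions with denominators in `S`. -/
abbrev Frac (B : Type) [Ring B] (S : Set B) : Type :=
  (↥S →₀ B) ⧸ fracRel B S

/-- The fraction `b|s`. -/
noncomputable def fracElt (B : Type) [Ring B] (S : Set B) (b s : B) (hs : s ∈ S) :
    Frac B S :=
  Submodule.Quotient.mk (Finsupp.single ⟨s, hs⟩ b)

/-- A left `B`-module is `S`-local if every `s ∈ S` acts invertibly by left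
multiplication. -/
def SLocal (B : Type) [Ring B] (S : Set B) (N : Type) [AddCommGroup N] [Module B N] :
    Prop :=
  ∀ s ∈ S, Function.Bijective (fun n : N => s • n)

section Aux
variable {B : Type} [Ring B] {S : Set B}

lemma frac_smul (a b s : B) (hs : s ∈ S) :
    a • fracElt B S b s hs = fracElt B S (a * b) s hs := by
  simp only [fracElt, ← Submodule.Quotient.mk_smul, Finsupp.smul_single, smul_eq_mul]

lemma frac_add (b b' s : B) (hs : s ∈ S) :
    fracElt B S b s hs + fracElt B S b' s hs = fracElt B S (b + b') s hs := by
  simp only [fracElt, ← Submodule.Quotient.mk_add, Finsupp.single_add]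

lemma frac_zero (s : B) (hs : s ∈ S) : fracElt B S 0 s hs = 0 := by
  simp [fracElt]

lemma frac_congr (b : B) {s s' : B} (hs : s ∈ S) (h : s = s') :
    fracElt B S b s hs = fracElt B S b s' (h ▸ hs) := by subst h; rfl

lemma frac_expand (b x s : B) (hs : s ∈ S) (hsx : s * x ∈ S) :
    fracElt B S (b * x) (s * x) hsx = fracElt B S b s hs := by
  rw [fracElt, fracElt, Submodule.Quotient.eq]
  have h : Finsupp.single (⟨s * x, hsx⟩ : ↥S) (b * x) - Finsupp.single ⟨s, hs⟩ b
      = b • (Finsupp.single (⟨s * x, hsx⟩ : ↥S) x - Finsupp.single ⟨s, hs⟩ 1) := by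
    simp [smul_sub, Finsupp.smul_single]
  rw [h]
  exact Submodule.smul_mem _ _ (Submodule.subset_span ⟨s, x, hs, hsx, rfl⟩)

variable (h1 : (1 : B) ∈ S) (hmul : ∀ s ∈ S, ∀ t ∈ S, s * t ∈ S)
  (hore1 : ∀ b : B, ∀ s ∈ S, ∃ u ∈ S, ∃ c : B, b * u = s * c)

include h1 hmul hore1 in
lemma frac_surj (z : Frac B S) : ∃ (b s : B) (hs : s ∈ S), z = fracElt B S b s hs := by
  obtain ⟨f, rfl⟩ := Submodule.Quotient.mk_surjective _ z
  induction f using Finsupp.induction with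
  | zero => exact ⟨0, 1, h1, by simp [fracElt]⟩
  | single_add t c f hts hc ih =>
    obtain ⟨b, s, hs, hbs⟩ := ih
    obtain ⟨u, hu, x, hux⟩ := hore1 (t : B) s hs
    have htu : (t : B) * u ∈ S := hmul t t.2 u hu
    have hsx : s * x ∈ S := hux ▸ htu
    refine ⟨c * u + b * x, (t : B) * u, htu, ?_⟩
    have e1 : Submodule.Quotient.mk (p := fracRel B S) (Finsupp.single t c + f)
        = fracElt B S c t t.2 + fracElt B S b s hs := by
      rw [Submodule.Quotient.mk_add, hbs]; rfl
    rw [e1, ← frac_expand c u (t : B) t.2 htu, ← frac_expand b x s hs hsx,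
      frac_congr (b * x) hsx hux.symm, frac_add]

include h1 hmul hore1 in
lemma frac_common : ∀ (n : ℕ) (x : Fin n → Frac B S),
    ∃ (s : B) (hs : s ∈ S) (b : Fin n → B), ∀ i, x i = fracElt B S (b i) s hs := by
  intro n
  induction n with
  | zero => exact fun x => ⟨1, h1, fun _ => 0, fun i => i.elim0⟩
  | succ n ih =>
    intro x
    obtain ⟨s, hs, b, hb⟩ := ih (fun i => x i.succ)
    obtain ⟨b0, s0, hs0, hb0⟩ := frac_surj h1 hmul hore1 (x 0)
    obtain ⟨u, hu, c, huc⟩ := hore1 s0 s hs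
    have ht : s0 * u ∈ S := hmul s0 hs0 u hu
    have hsc : s * c ∈ S := huc ▸ ht
    refine ⟨s0 * u, ht, Fin.cons (b0 * u) (fun i => b i * c), ?_⟩
    refine Fin.cases ?_ ?_
    · rw [hb0, Fin.cons_zero, ← frac_expand b0 u s0 hs0 ht]
    · intro j
      rw [hb j, Fin.cons_succ, ← frac_expand (b j) c s hs hsc,
        frac_congr (b j * c) hsc huc.symm]

lemma frac_sum (n : ℕ) (a b : Fin n → B) (s : B) (hs : s ∈ S) :
    ∑ i, a i • fracElt B S (b i) s hs = fracElt B S (∑ i, a i * b i) s hs := by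
  induction n with
  | zero => simp [frac_zero s hs]
  | succ n ih =>
    rw [Fin.sum_univ_succ, Fin.sum_univ_succ, ih (fun i => a i.succ) (fun i => b i.succ),
      frac_smul, frac_add]

end Aux

open MulOpposite OreLocalization in
lemma frac_ker {B : Type} [Ring B] {S : Set B}
    (h1 : (1 : B) ∈ S) (hmul : ∀ s ∈ S, ∀ t ∈ S, s * t ∈ S)
    (hore1 : ∀ b : B, ∀ s ∈ S, ∃ u ∈ S, ∃ c : B, b * u = s * c)
    (hore2 : ∀ b : B, ∀ s ∈ S, s * b = 0 → ∃ t ∈ S, b * t = 0)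
    (b s : B) (hs : s ∈ S) (h : fracElt B S b s hs = 0) :
    ∃ x : B, b * x = 0 ∧ s * x ∈ S := by
  classical
  set S' : Submonoid Bᵐᵒᵖ :=
    { carrier := {a | a.unop ∈ S}
      one_mem' := h1
      mul_mem' := fun {a c} ha hc => hmul c.unop hc a.unop ha } with hS'
  have memS' : ∀ a : Bᵐᵒᵖ, a ∈ S' ↔ a.unop ∈ S := fun a => Iff.rfl
  haveI : OreSet S' :=
    { ore_right_cancel := by
        rintro r₁ r₂ t heq
        have heq' := congrArg unop heq
        simp only [unop_mul] at heq'
        have h0 : t.1.unop * (r₁.unop - r₂.unop) = 0 := by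
          rw [mul_sub, heq', sub_self]
        obtain ⟨u, hu, hu0⟩ := hore2 _ _ t.2 h0
        refine ⟨⟨op u, hu⟩, unop_injective ?_⟩
        simp only [unop_mul, unop_op]
        have hru : r₁.unop * u = r₂.unop * u := by
          have h2 : (r₁.unop - r₂.unop) * u = 0 := hu0
          rw [sub_mul, sub_eq_zero] at h2
          exact h2
        exact hru
      oreNum := fun r t => op (hore1 r.unop t.1.unop t.2).choose_spec.2.choose
      oreDenom := fun r t => ⟨op (hore1 r.unop t.1.unop t.2).choose,
        (hore1 r.unop t.1.unop t.2).choose_spec.1⟩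
      ore_eq := fun r t => unop_injective <| by
        simp only [unop_mul, unop_op]
        exact (hore1 r.unop t.1.unop t.2).choose_spec.2.choose_spec }
  let φ : (↥S →₀ B) →+ OreLocalization S' Bᵐᵒᵖ :=
    Finsupp.liftAddHom fun t =>
      AddMonoidHom.mk' (fun c => op c /ₒ (⟨op (t : B), t.2⟩ : S'))
        (fun a c => by
          show op (a + c) /ₒ _ = op a /ₒ _ + op c /ₒ _
          rw [op_add, ← OreLocalization.add_oreDiv])
  have hφ : ∀ (t : ↥S) (c : B), φ (Finsupp.single t c) = op c /ₒ (⟨op (t : B), t.2⟩ : S') :=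
    fun t c => Finsupp.liftAddHom_apply_single _ _ _
  have hker : ∀ v ∈ fracRel B S, φ v = 0 := by
    intro v hv
    rw [fracRel, Submodule.mem_span_set'] at hv
    obtain ⟨n, f, g, rfl⟩ := hv
    rw [map_sum]
    refine Finset.sum_eq_zero fun i _ => ?_
    obtain ⟨t, x, ht, htx, hg⟩ := (g i).2
    rw [hg, smul_sub, map_sub, Finsupp.smul_single, Finsupp.smul_single, smul_eq_mul,
      smul_eq_mul, mul_one, hφ, hφ, sub_eq_zero]
    have hmem : op x * op (t : B) ∈ S' := by
      rw [← op_mul]; exact htx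
    convert (OreLocalization.expand (op (f i)) (⟨op (t : B), ht⟩ : S') (op x) hmem).symm using 2 <;> rfl
  have hmem : Finsupp.single (⟨s, hs⟩ : ↥S) b ∈ fracRel B S :=
    (Submodule.Quotient.mk_eq_zero _).mp h
  have h0 : op b /ₒ (⟨op s, hs⟩ : S') = 0 := by
    rw [← hφ ⟨s, hs⟩ b]; exact hker _ hmem
  rw [OreLocalization.zero_def, OreLocalization.oreDiv_eq_iff] at h0
  obtain ⟨u, v, hv1, hv2⟩ := h0
  refine ⟨v.unop, ?_, ?_⟩
  · have hvb : v * op b = 0 := by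
      rw [← smul_eq_mul, ← hv1, Submonoid.smul_def, smul_zero]
    have := congrArg unop hvb
    simpa using this
  · have hv2' : op (s * v.unop) = (u : Bᵐᵒᵖ) := by
      rw [op_mul, op_unop]
      symm
      simpa using hv2
    have hu := u.2
    rw [← hv2'] at hu
    exact hu

theorem statement5 (B : Type) [Ring B] (S : Set B)
    (h1 : (1 : B) ∈ S) (hmul : ∀ s ∈ S, ∀ t ∈ S, s * t ∈ S)
    -- S is a right Ore set:
    (hore1 : ∀ b : B, ∀ s ∈ S, ∃ u ∈ S, ∃ c : B, b * u = s * c)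
    (hore2 : ∀ b : B, ∀ s ∈ S, s * b = 0 → ∃ t ∈ S, b * t = 0) :
    -- B|S is the filtered colimit over 𝒮 of free rank-one left B-modules B|s :
    -- (i) the transition maps (right multiplication by x) are compatible:
    (∀ (b x s : B) (hs : s ∈ S) (hsx : s * x ∈ S),
        fracElt B S (b * x) (s * x) hsx = fracElt B S b s hs) ∧
    -- (ii) every element of B|S lies in the image of some B|s :
    (∀ z : Frac B S, ∃ (b s : B) (hs : s ∈ S), z = fracElt B S b s hs) ∧
    -- (iii) an element b|s vanishes iff it dies at some later stage of the colimit: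
    (∀ (b s : B) (hs : s ∈ S),
        fracElt B S b s hs = 0 ↔ ∃ x : B, b * x = 0 ∧ s * x ∈ S) ∧
    -- consequently B|S ≅ B[S⁻¹] is flat as a left B-module (equational criterion):
    (∀ (n : ℕ) (a : Fin n → B) (x : Fin n → Frac B S),
        (∑ i, a i • x i) = 0 →
          ∃ (m : ℕ) (y : Fin m → Frac B S) (c : Fin n → Fin m → B),
            (∀ i, x i = ∑ j, c i j • y j) ∧ ∀ j, (∑ i, a i * c i j) = 0) := by
  refine ⟨fun b x s hs hsx => frac_expand b x s hs hsx, frac_surj h1 hmul hore1, ?_, ?_⟩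
  · intro b s hs
    constructor
    · exact frac_ker h1 hmul hore1 hore2 b s hs
    · rintro ⟨x, hbx, hsx⟩
      rw [← frac_expand b x s hs hsx, hbx, frac_zero]
  · intro n a x hx
    obtain ⟨s, hs, b, hb⟩ := frac_common h1 hmul hore1 n x
    have hsum : fracElt B S (∑ i, a i * b i) s hs = 0 := by
      have e : ∑ i, a i • x i = ∑ i, a i • fracElt B S (b i) s hs :=
        Finset.sum_congr rfl fun i _ => by rw [hb i]
      rw [← frac_sum n a b s hs, ← e, hx]
    obtain ⟨w, hw0, hsw⟩ := frac_ker h1 hmul hore1 hore2 _ s hs hsum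
    refine ⟨1, fun _ => fracElt B S 1 (s * w) hsw, fun i _ => b i * w, ?_, ?_⟩
    · intro i
      rw [hb i, Fin.sum_univ_one, frac_smul, mul_one]
      exact (frac_expand (b i) w s hs hsw).symm
    · intro j
      calc ∑ i, a i * (b i * w) = (∑ i, a i * b i) * w := by
            rw [Finset.sum_mul]
            exact Finset.sum_congr rfl fun i _ => (mul_assoc _ _ _).symm
        _ = 0 := hw0
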